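/- Let α ∈ (1,2), σ² > 0, δ > 0 and I > 0. With f₂ := 1 − K, f₃(v) := f₂(2v) and J_{kl} := ∫_ℝ f_k(v)·f_l(v)/|v|^{α+1} dv, the 3×3 real matrix Σ = (1/2)·[[2σ⁴, 0, 0], [0, c_α δ I · J₂₂, c_α δ I · J₂₃], [0, c_α δ I · J₂₃, c_α δ I · J₃₃]] is symmetric and positive definite. -/

import Mathlib

open MeasureTheory Real Matrix Set

/-- The smooth truncation kernel `K`. -/
noncomputable def K (x : ℝ) : ℝ :=
  if |x| ≤ 1 then 1
  else if |x| < 2 then (1 + Real.exp (1 / (2 - |x|) + 1 / (1 - |x|)))⁻¹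
  else 0

/-- `f₂ = 1 - K`. -/
noncomputable def f₂ (v : ℝ) : ℝ := 1 - K v

/-- `f₃ v = f₂ (2 v)`. -/
noncomputable def f₃ (v : ℝ) : ℝ := f₂ (2 * v)

/-- `c_α = -α(α-1)/(Γ(2-α) cos(πα/2))`. -/
noncomputable def cα (α : ℝ) : ℝ :=
  -(α * (α - 1)) / (Real.Gamma (2 - α) * Real.cos (Real.pi * α / 2))

/-- `J_kl = ∫ f_k f_l/|v|^(α+1) dv`. -/
noncomputable def J (α : ℝ) (fk fl : ℝ → ℝ) : ℝ := ∫ v : ℝ, fk v * fl v / |v| ^ (α + 1)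

lemma K_mem (x : ℝ) : K x ∈ Icc (0:ℝ) 1 := by
  unfold K
  split_ifs with h1 h2
  · exact ⟨zero_le_one, le_refl 1⟩
  · constructor
    · positivity
    · rw [inv_le_one_iff₀]
      right
      nlinarith [Real.exp_pos (1 / (2 - |x|) + 1 / (1 - |x|))]
  · exact ⟨le_refl 0, zero_le_one⟩

lemma measurable_K : Measurable K := by
  unfold K
  apply Measurable.ite (measurableSet_le (by fun_prop) measurable_const) measurable_const
  apply Measurable.ite (measurableSet_lt (by fun_prop) measurable_const) _ measurable_const
  fun_prop

lemma K_eq_one {x : ℝ} (h : |x| ≤ 1) : K x = 1 := by simp [K, h]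
lemma K_eq_zero {x : ℝ} (h : 2 ≤ |x|) : K x = 0 := by
  unfold K
  rw [if_neg (by linarith), if_neg (by linarith)]

lemma K_half {x : ℝ} (h1 : |x| ≤ 3/2) : (1:ℝ)/2 ≤ K x := by
  unfold K
  split_ifs with ha hb
  · norm_num
  · push_neg at ha
    have hexp : Real.exp (1 / (2 - |x|) + 1 / (1 - |x|)) ≤ 1 := by
      rw [Real.exp_le_one_iff]
      have h2 : (0:ℝ) < 2 - |x| := by linarith
      have h3 : (0:ℝ) < |x| - 1 := by linarith
      have hnd : 1 / (1 - |x|) = -(1/(|x| - 1)) := by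
        rw [← neg_div, div_eq_div_iff (by linarith) (by linarith)]
        ring
      rw [hnd]
      have : 1 / (2 - |x|) ≤ 1 / (|x| - 1) := by
        apply one_div_le_one_div_of_le h3
        linarith
      linarith
    calc (1:ℝ)/2 = (2:ℝ)⁻¹ := by norm_num
    _ ≤ (1 + Real.exp (1 / (2 - |x|) + 1 / (1 - |x|)))⁻¹ := by
        rw [inv_le_inv₀ (by norm_num) (by positivity)]
        linarith
  · push_neg at hb
    linarith

lemma measurable_f₂ : Measurable f₂ := measurable_const.sub measurable_K
lemma measurable_f₃ : Measurable f₃ := measurable_f₂.comp (measurable_const.mul measurable_id)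
lemma f₂_mem (v : ℝ) : f₂ v ∈ Icc (0:ℝ) 1 := by
  have := K_mem v; exact ⟨by simp [f₂]; linarith [this.2], by simp [f₂]; linarith [this.1]⟩
lemma f₃_mem (v : ℝ) : f₃ v ∈ Icc (0:ℝ) 1 := f₂_mem _
lemma f₂_zero {v : ℝ} (h : |v| ≤ 1) : f₂ v = 0 := by simp [f₂, K_eq_one h]
lemma f₂_one {v : ℝ} (h : 2 ≤ |v|) : f₂ v = 1 := by simp [f₂, K_eq_zero h]
lemma f₃_zero {v : ℝ} (h : |v| ≤ 1/2) : f₃ v = 0 := by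
  apply f₂_zero; rw [abs_mul]; rw [abs_two]; linarith
lemma f₃_one {v : ℝ} (h : 1 ≤ |v|) : f₃ v = 1 := by
  apply f₂_one; rw [abs_mul, abs_two]; linarith

-- majorant integrability
lemma integrable_majorant {α : ℝ} (hα1 : 1 < α) :
    IntegrableOn (fun v : ℝ => |v| ^ (-(α+1))) {v : ℝ | 1/2 ≤ |v|} := by
  have hset : {v : ℝ | 1/2 ≤ |v|} = Iic (-(1/2):ℝ) ∪ Ici (1/2 : ℝ) := by
    ext v
    simp [abs_le, le_abs]
    constructor
    · intro h; rcases h with h | h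
      · right; exact h
      · left; linarith
    · intro h; rcases h with h | h
      · right; linarith
      · left; exact h
  have hpos : IntegrableOn (fun v : ℝ => |v| ^ (-(α+1))) (Ici (1/2 : ℝ)) := by
    rw [integrableOn_Ici_iff_integrableOn_Ioi]
    apply (integrableOn_Ioi_rpow_of_lt (show -(α+1) < -1 by linarith) (by norm_num : (0:ℝ) < 1/2)).congr_fun
      _ measurableSet_Ioi
    intro x hx
    simp only []
    rw [abs_of_pos (lt_trans (by norm_num) hx)]
  rw [hset, integrableOn_union]
  refine ⟨?_, hpos⟩
  rw [← (Measure.measurePreserving_neg (volume : Measure ℝ)).integrableOn_comp_preimage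
      (Homeomorph.neg ℝ).measurableEmbedding]
  simp only [Function.comp_def, abs_neg, neg_preimage, neg_Iic, neg_neg]
  exact hpos

lemma integrable_quot {α : ℝ} (hα1 : 1 < α) {g : ℝ → ℝ} (hg : Measurable g)
    (h0 : ∀ v : ℝ, |v| ≤ 1/2 → g v = 0) (hb : ∀ v, |g v| ≤ 1) :
    Integrable (fun v : ℝ => g v / |v| ^ (α + 1)) := by
  have hM : Integrable ({v : ℝ | 1/2 ≤ |v|}.indicator (fun v : ℝ => |v| ^ (-(α+1)))) := by
    rw [integrable_indicator_iff]
    · exact integrable_majorant hα1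
    · exact measurableSet_le measurable_const (by fun_prop)
  apply Integrable.mono' hM
  · exact ((hg.div ((measurable_id.abs).pow_const _)).aestronglyMeasurable)
  · filter_upwards with v
    rw [norm_eq_abs]
    by_cases hv : 1/2 ≤ |v|
    · rw [indicator_of_mem (show v ∈ {v : ℝ | 1/2 ≤ |v|} from hv)]
      have hw : (0:ℝ) < |v| ^ (α+1) := by
        apply rpow_pos_of_pos; linarith
      rw [abs_div, abs_of_pos hw, div_le_iff₀ hw, rpow_neg (abs_nonneg v),
        inv_mul_cancel₀ (ne_of_gt hw)]
      exact hb v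
    · rw [indicator_of_notMem (show v ∉ {v : ℝ | 1/2 ≤ |v|} from hv), h0 v (by linarith [not_le.mp hv])]
      simp


lemma prod_bound {u w : ℝ → ℝ} (hu : ∀ v, u v ∈ Icc (0:ℝ) 1) (hw : ∀ v, w v ∈ Icc (0:ℝ) 1)
    (v : ℝ) : |u v * w v| ≤ 1 := by
  rw [abs_mul]
  calc |u v| * |w v| ≤ 1 * 1 := by
        apply mul_le_mul _ _ (abs_nonneg _) zero_le_one
        · rw [abs_of_nonneg (hu v).1]; exact (hu v).2
        · rw [abs_of_nonneg (hw v).1]; exact (hw v).2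
  _ = 1 := mul_one 1

lemma int22 {α : ℝ} (hα1 : 1 < α) : Integrable (fun v : ℝ => f₂ v * f₂ v / |v| ^ (α + 1)) :=
  integrable_quot hα1 (measurable_f₂.mul measurable_f₂)
    (fun v hv => by rw [f₂_zero (by linarith : |v| ≤ 1), zero_mul])
    (prod_bound f₂_mem f₂_mem)

lemma int23 {α : ℝ} (hα1 : 1 < α) : Integrable (fun v : ℝ => f₂ v * f₃ v / |v| ^ (α + 1)) :=
  integrable_quot hα1 (measurable_f₂.mul measurable_f₃)
    (fun v hv => by rw [f₂_zero (by linarith : |v| ≤ 1), zero_mul])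
    (prod_bound f₂_mem f₃_mem)

lemma int33 {α : ℝ} (hα1 : 1 < α) : Integrable (fun v : ℝ => f₃ v * f₃ v / |v| ^ (α + 1)) :=
  integrable_quot hα1 (measurable_f₃.mul measurable_f₃)
    (fun v hv => by rw [f₃_zero hv, zero_mul])
    (prod_bound f₃_mem f₃_mem)

lemma J_expand {α : ℝ} (hα1 : 1 < α) (a b : ℝ) :
    (∫ v : ℝ, (a * f₂ v + b * f₃ v)^2 / |v| ^ (α + 1))
      = a^2 * J α f₂ f₂ + 2*a*b * J α f₂ f₃ + b^2 * J α f₃ f₃ := by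
  have key : ∀ v : ℝ, (a * f₂ v + b * f₃ v)^2 / |v| ^ (α + 1)
      = a^2 * (f₂ v * f₂ v / |v| ^ (α + 1)) + (2*a*b) * (f₂ v * f₃ v / |v| ^ (α + 1))
        + b^2 * (f₃ v * f₃ v / |v| ^ (α + 1)) := by
    intro v; ring
  simp_rw [key]
  have h1 : Integrable (fun v : ℝ => a^2 * (f₂ v * f₂ v / |v| ^ (α + 1))) :=
    (int22 hα1).const_mul _
  have h2 : Integrable (fun v : ℝ => (2*a*b) * (f₂ v * f₃ v / |v| ^ (α + 1))) :=
    (int23 hα1).const_mul _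
  have h3 : Integrable (fun v : ℝ => b^2 * (f₃ v * f₃ v / |v| ^ (α + 1))) :=
    (int33 hα1).const_mul _
  have h12 : Integrable (fun v : ℝ => a^2 * (f₂ v * f₂ v / |v| ^ (α + 1))
      + (2*a*b) * (f₂ v * f₃ v / |v| ^ (α + 1))) := h1.add h2
  rw [integral_add h12 h3, integral_add h1 h2,
    MeasureTheory.integral_const_mul, MeasureTheory.integral_const_mul, MeasureTheory.integral_const_mul]
  rfl

lemma Q_pos {α : ℝ} (hα1 : 1 < α) (hα2 : α < 2) {a b : ℝ} (hab : ¬(a = 0 ∧ b = 0)) :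
    0 < a^2 * J α f₂ f₂ + 2*a*b * J α f₂ f₃ + b^2 * J α f₃ f₃ := by
  rw [← J_expand hα1 a b]
  set h : ℝ → ℝ := fun v => (a * f₂ v + b * f₃ v)^2 / |v| ^ (α + 1) with hh
  have hint : Integrable h := by
    have hbig : Integrable (fun v : ℝ => a^2 * (f₂ v * f₂ v / |v| ^ (α + 1))
        + (2*a*b) * (f₂ v * f₃ v / |v| ^ (α + 1)) + b^2 * (f₃ v * f₃ v / |v| ^ (α + 1))) :=
      (((int22 hα1).const_mul (a^2)).add ((int23 hα1).const_mul (2*a*b))).add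
        ((int33 hα1).const_mul (b^2))
    exact hbig.congr (Filter.Eventually.of_forall fun v => by simp only [hh]; ring)
  have hnn : ∀ v, 0 ≤ h v := fun v => div_nonneg (sq_nonneg _) (rpow_nonneg (abs_nonneg v) _)
  have main : ∀ (lo hi c : ℝ), lo < hi → 0 < c → (∀ v ∈ Icc lo hi, c ≤ h v) →
      0 < ∫ v, h v := by
    intro lo hi c hlt hc hle
    have hfin : volume (Icc lo hi) ≠ ⊤ := by rw [Real.volume_Icc]; exact ENNReal.ofReal_ne_top
    have hμ : 0 < (volume (Icc lo hi)).toReal := by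
      rw [Real.volume_Icc, ENNReal.toReal_ofReal (by linarith)]; linarith
    have h1 : c * (volume (Icc lo hi)).toReal ≤ ∫ v in Icc lo hi, h v :=
      setIntegral_ge_of_const_le_real measurableSet_Icc hfin hle hint.integrableOn
    have h2 : (∫ v in Icc lo hi, h v) ≤ ∫ v, h v :=
      setIntegral_le_integral hint (Filter.Eventually.of_forall hnn)
    nlinarith
  have hw27 : ∀ v : ℝ, |v| ≤ 3 → |v| ^ (α+1) ≤ 27 := by
    intro v hv
    calc |v| ^ (α+1) ≤ (3:ℝ) ^ (α+1) := by
          apply Real.rpow_le_rpow (abs_nonneg v) hv (by linarith)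
    _ ≤ (3:ℝ) ^ ((3:ℕ):ℝ) := by
          apply Real.rpow_le_rpow_of_exponent_le (by norm_num) (by push_cast; linarith)
    _ = 27 := by rw [Real.rpow_natCast]; norm_num
  by_cases hs : a + b = 0
  · have ha : a ≠ 0 := by
      intro h0
      exact hab ⟨h0, by linarith [hs, h0]⟩
    have hb : b = -a := by linarith
    have hc : 0 < a^2/108 := by
      apply div_pos _ (by norm_num)
      exact lt_of_le_of_ne (sq_nonneg _) (Ne.symm (pow_ne_zero 2 ha))
    apply main 1 (3/2) (a^2/108) (by norm_num) hc
    intro v hv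
    have hvabs : |v| = v := abs_of_pos (by linarith [hv.1])
    have hKv : 1/2 ≤ K v := K_half (by rw [hvabs]; linarith [hv.2])
    have hval : a * f₂ v + b * f₃ v = -(a * K v) := by
      rw [f₃_one (by rw [hvabs]; exact hv.1), hb]
      simp only [f₂]; ring
    have hwpos : 0 < |v| ^ (α+1) := Real.rpow_pos_of_pos (by rw [hvabs]; linarith [hv.1]) _
    have hw : |v| ^ (α+1) ≤ 27 := hw27 v (by rw [hvabs]; linarith [hv.2])
    have hK2 : (1:ℝ)/4 ≤ (K v)^2 := by nlinarith [(K_mem v).1]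
    simp only [hh, hval]
    rw [div_le_div_iff₀ (by norm_num) hwpos]
    nlinarith [mul_le_mul_of_nonneg_left hK2 (sq_nonneg a),
      mul_le_mul_of_nonneg_left hw (sq_nonneg a)]
  · have hc : 0 < (a+b)^2/27 := by
      apply div_pos _ (by norm_num)
      exact lt_of_le_of_ne (sq_nonneg _) (Ne.symm (pow_ne_zero 2 hs))
    apply main 2 3 ((a+b)^2/27) (by norm_num) hc
    intro v hv
    have hvabs : |v| = v := abs_of_pos (by linarith [hv.1])
    have hval : a * f₂ v + b * f₃ v = a + b := by
      rw [f₂_one (by rw [hvabs]; exact hv.1), f₃_one (by rw [hvabs]; linarith [hv.1])]; ring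
    have hwpos : 0 < |v| ^ (α+1) := Real.rpow_pos_of_pos (by rw [hvabs]; linarith [hv.1]) _
    have hw : |v| ^ (α+1) ≤ 27 := hw27 v (by rw [hvabs]; linarith [hv.2])
    simp only [hh, hval]
    rw [div_le_div_iff₀ (by norm_num) hwpos]
    nlinarith [sq_nonneg (a+b)]

lemma cα_pos {α : ℝ} (hα1 : 1 < α) (hα2 : α < 2) : 0 < cα α := by
  have hΓ : 0 < Real.Gamma (2 - α) := Real.Gamma_pos_of_pos (by linarith)
  have hcos : Real.cos (Real.pi * α / 2) < 0 := by
    apply Real.cos_neg_of_pi_div_two_lt_of_lt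
    · rw [div_lt_div_iff₀ (by norm_num) (by norm_num)]
      nlinarith [Real.pi_pos]
    · nlinarith [Real.pi_pos]
  apply div_pos_of_neg_of_neg
  · nlinarith
  · exact mul_neg_of_pos_of_neg hΓ hcos

/-- For `α ∈ (1,2)`, `σ² > 0`, `δ > 0`, `I > 0`, the matrix
`Σ = (1/2)·[[2σ⁴,0,0],[0, cδI J₂₂, cδI J₂₃],[0, cδI J₂₃, cδI J₃₃]]` is symmetric and
positive definite. -/
theorem stmt5 (α σsq δ I : ℝ) (hα1 : 1 < α) (hα2 : α < 2)
    (hσ : 0 < σsq) (hδ : 0 < δ) (hI : 0 < I) :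
    ((1 / 2 : ℝ) •
      !![2 * σsq ^ 2, 0, 0;
         0, cα α * δ * I * J α f₂ f₂, cα α * δ * I * J α f₂ f₃;
         0, cα α * δ * I * J α f₂ f₃, cα α * δ * I * J α f₃ f₃]).IsSymm ∧
    ((1 / 2 : ℝ) •
      !![2 * σsq ^ 2, 0, 0;
         0, cα α * δ * I * J α f₂ f₂, cα α * δ * I * J α f₂ f₃;
         0, cα α * δ * I * J α f₂ f₃, cα α * δ * I * J α f₃ f₃]).PosDef := by
  have hsymm : ((1 / 2 : ℝ) •
      !![2 * σsq ^ 2, 0, 0;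
         0, cα α * δ * I * J α f₂ f₂, cα α * δ * I * J α f₂ f₃;
         0, cα α * δ * I * J α f₂ f₃, cα α * δ * I * J α f₃ f₃]).IsSymm := by
    unfold Matrix.IsSymm
    ext i j
    fin_cases i <;> fin_cases j <;> simp [Matrix.transpose_apply, Matrix.vecHead, Matrix.vecTail]
  refine ⟨hsymm, Matrix.PosDef.of_dotProduct_mulVec_pos (by rw [Matrix.IsHermitian, Matrix.conjTranspose_eq_transpose_of_trivial]; exact hsymm) ?_⟩
  intro x hx
  have hc : 0 < cα α * δ * I := mul_pos (mul_pos (cα_pos hα1 hα2) hδ) hI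
  simp only [Matrix.smul_mulVec, Matrix.mulVec, dotProduct, Fin.sum_univ_three,
    Matrix.cons_val', Matrix.cons_val_zero, Matrix.cons_val_one, Matrix.head_cons,
    Matrix.empty_val', Matrix.cons_val_fin_one, Matrix.head_fin_const, Pi.smul_apply,
    smul_eq_mul, Pi.star_apply, star_trivial, Matrix.cons_val_two, Matrix.tail_cons, Matrix.smul_apply, Matrix.of_apply]
  by_cases h12 : x 1 = 0 ∧ x 2 = 0
  · have h0 : x 0 ≠ 0 := by
      intro h0
      apply hx
      funext i
      fin_cases i
      · exact h0
      · exact h12.1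
      · exact h12.2
    rw [h12.1, h12.2]
    have hpos : 0 < x 0 * x 0 := mul_self_pos.mpr h0
    nlinarith [mul_pos hpos (pow_pos hσ 2)]
  · have hQ := Q_pos hα1 hα2 h12
    nlinarith [mul_pos hc hQ, mul_nonneg (mul_nonneg (le_of_lt hσ) (le_of_lt hσ)) (mul_self_nonneg (x 0))]
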